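/- Let n ≥ 5 and n/(n-4) < p < (n+4)/(n-4). Define K₀ = (8/(p-1)⁴)[(n-2)(n-4)(p-1)³ + 2(n²-10n+20)(p-1)² − 16(n-4)(p-1) + 32], K₁ = −(2/(p-1)³)[(n-2)(n-4)(p-1)³ + 4(n²-10n+20)(p-1)² − 48(n-4)(p-1) + 128], and K₃ = (2/(p-1))[(n-4)(p-1) − 8]. Then K₀ > 0, K₁ > 0, and K₃ < 0. -/
import Mathlib

/-- Signs of the coefficients `K₀`, `K₁`, `K₃` of the Emden–Fowler
transformed equation: for `n ≥ 5` and `n/(n-4) < p < (n+4)/(n-4)` one has `K₀ > 0`, `K₁ > 0`,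
`K₃ < 0`. -/
theorem stmt_8 (n : ℕ) (hn : 5 ≤ n) (p : ℝ)
    (hp1 : (n : ℝ) / ((n : ℝ) - 4) < p) (hp2 : p < ((n : ℝ) + 4) / ((n : ℝ) - 4)) :
    0 < 8 / (p - 1) ^ 4 *
        (((n : ℝ) - 2) * ((n : ℝ) - 4) * (p - 1) ^ 3
          + 2 * ((n : ℝ) ^ 2 - 10 * (n : ℝ) + 20) * (p - 1) ^ 2
          - 16 * ((n : ℝ) - 4) * (p - 1) + 32) ∧
    0 < -(2 / (p - 1) ^ 3) *
        (((n : ℝ) - 2) * ((n : ℝ) - 4) * (p - 1) ^ 3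
          + 4 * ((n : ℝ) ^ 2 - 10 * (n : ℝ) + 20) * (p - 1) ^ 2
          - 48 * ((n : ℝ) - 4) * (p - 1) + 128) ∧
    2 / (p - 1) * (((n : ℝ) - 4) * (p - 1) - 8) < 0 := by
  have hn5 : (5 : ℝ) ≤ (n : ℝ) := by exact_mod_cast hn
  have hm : (0 : ℝ) < (n : ℝ) - 4 := by linarith
  set t : ℝ := p - 1 with ht
  have h4 : 4 < t * ((n : ℝ) - 4) := by
    have := (div_lt_iff₀ hm).mp hp1
    nlinarith
  have h8 : t * ((n : ℝ) - 4) < 8 := by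
    have h2 := (lt_div_iff₀ hm).mp hp2
    nlinarith
  have htpos : 0 < t := by nlinarith
  refine ⟨?_, ?_, ?_⟩
  · have hB : ((n : ℝ) - 2) * ((n : ℝ) - 4) * t ^ 3
          + 2 * ((n : ℝ) ^ 2 - 10 * (n : ℝ) + 20) * t ^ 2
          - 16 * ((n : ℝ) - 4) * t + 32
        = (t + 2) * (((n : ℝ) - 2) * t - 4) * (((n : ℝ) - 4) * t - 4) := by ring
    rw [hB]
    have h1 : 0 < t + 2 := by linarith
    have h2 : 0 < ((n : ℝ) - 4) * t - 4 := by nlinarith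
    have h3 : 0 < ((n : ℝ) - 2) * t - 4 := by nlinarith
    positivity
  · have hC : ((n : ℝ) - 2) * ((n : ℝ) - 4) * t ^ 3
          + 4 * ((n : ℝ) ^ 2 - 10 * (n : ℝ) + 20) * t ^ 2
          - 48 * ((n : ℝ) - 4) * t + 128
        = (8 - ((n : ℝ) - 4) * t) * (16 - 4 * ((n : ℝ) - 4) * t - ((n : ℝ) - 2) * t ^ 2) := by
      ring
    rw [hC, neg_mul]
    have h1 : 0 < 8 - ((n : ℝ) - 4) * t := by nlinarith
    have h2 : 16 - 4 * ((n : ℝ) - 4) * t - ((n : ℝ) - 2) * t ^ 2 < 0 := by nlinarith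
    have h3 : 0 < 2 / t ^ 3 := by positivity
    nlinarith [mul_pos h3 (mul_pos h1 (neg_pos.mpr h2))]
  · have h1 : ((n : ℝ) - 4) * t - 8 < 0 := by nlinarith
    have h2 : 0 < 2 / t := by positivity
    exact mul_neg_of_pos_of_neg h2 h1
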